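/- The noncommutative NLS-type map T_{a,b,c} is noninvolutive: the composition T ∘ T sends z₂ to z₂ + y₂x₁ + c⁻¹(z₂x₂ + y₂(a + x₁x₂))(b·x₁ - y₁z₂), which in general differs from z₂ (e.g. it differs whenever y₂x₁ + c⁻¹(z₂x₂ + y₂(a + x₁x₂))(b·x₁ - y₁z₂) ≠ 0). -/
import Mathlib


/-- The noncommutative NLS-type map `T_{a,b,c} : R⁶ → R⁶`,
`(x₁,x₂,y₁,y₂,z₁,z₂) ↦ (u₁,u₂,v₁,v₂,w₁,w₂)`. -/
def Tmap {R : Type*} [DivisionRing R] (a b c : R)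
    (p : R × R × R × R × R × R) : R × R × R × R × R × R :=
  let x1 := p.1; let x2 := p.2.1; let y1 := p.2.2.1; let y2 := p.2.2.2.1
  let z1 := p.2.2.2.2.1; let z2 := p.2.2.2.2.2
  ((b * x1 - y1 * z2) * c⁻¹,
   a * c * (z1 * y2 * (a + x1 * x2) + (c + z1 * z2) * x2)
     * (a * b * c + (y1 * (c + z2 * z1) - b * x1 * z1)
         * (y2 * (a + x1 * x2) + z2 * x2))⁻¹,
   (y1 * (c + z2 * z1) - b * x1 * z1) * (a * c)⁻¹,
   z2 * x2 + y2 * (a + x1 * x2),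
   z1 - (z1 * y2 * (a + x1 * x2) + (c + z1 * z2) * x2)
     * (y2 * (a + x1 * x2) + z2 * x2
         + a * b * c * (y1 * (c + z2 * z1) - b * x1 * z1)⁻¹)⁻¹,
   z2 + y2 * x1)

/-- The noncommutative NLS-type map `T_{a,b,c}` is noninvolutive: `T ∘ T` sends
`z₂` to `z₂ + y₂x₁ + c⁻¹(z₂x₂ + y₂(a + x₁x₂))(bx₁ - y₁z₂)`, which differs from
`z₂` whenever `y₂x₁ + c⁻¹(z₂x₂ + y₂(a + x₁x₂))(bx₁ - y₁z₂) ≠ 0`. -/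
theorem Tmap_noninvolutive {R : Type*} [DivisionRing R]
    (a b c x1 x2 y1 y2 z1 z2 : R)
    (ha : ∀ r : R, a * r = r * a) (hb : ∀ r : R, b * r = r * b)
    (hc : ∀ r : R, c * r = r * c)
    (ha0 : a ≠ 0) (hb0 : b ≠ 0) (hc0 : c ≠ 0)
    (h : y2 * x1 + c⁻¹ * (z2 * x2 + y2 * (a + x1 * x2)) * (b * x1 - y1 * z2) ≠ 0) :
    (Tmap a b c (Tmap a b c (x1, x2, y1, y2, z1, z2))).2.2.2.2.2
        = z2 + y2 * x1
          + c⁻¹ * (z2 * x2 + y2 * (a + x1 * x2)) * (b * x1 - y1 * z2)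
      ∧ (Tmap a b c (Tmap a b c (x1, x2, y1, y2, z1, z2))).2.2.2.2.2 ≠ z2 := by
  have hcinv : ∀ r : R, c⁻¹ * r = r * c⁻¹ := by
    intro r
    have hcr : Commute c r := hc r
    exact hcr.inv_left₀
  have key : (Tmap a b c (Tmap a b c (x1, x2, y1, y2, z1, z2))).2.2.2.2.2
      = z2 + y2 * x1
        + c⁻¹ * (z2 * x2 + y2 * (a + x1 * x2)) * (b * x1 - y1 * z2) := by
    simp only [Tmap]
    conv_rhs => rw [mul_assoc, hcinv, mul_assoc]
  refine ⟨key, ?_⟩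
  rw [key]
  intro hcontra
  apply h
  have : z2 + (y2 * x1 + c⁻¹ * (z2 * x2 + y2 * (a + x1 * x2)) * (b * x1 - y1 * z2)) = z2 + 0 := by
    rw [add_zero, ← add_assoc, hcontra]
  exact add_left_cancel this
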